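/- Let M be a finite Galois extension of ℚ, let K be an intermediate field of M/ℚ with [K : ℚ] = 2, let H be the subgroup of Gal(M/ℚ) consisting of automorphisms fixing K pointwise, let σ₀ ∈ Gal(M/ℚ) with σ₀ ∉ H, let A be a commutative group, and let ψ : H →* A be a group homomorphism such that ψ(h) · ψ(σ₀⁻¹ h σ₀) = 1 for all h ∈ H (note σ₀⁻¹ h σ₀ ∈ H since H has index 2 and is hence normal). Then the fixed field of the image of ker ψ in Gal(M/ℚ) is a Galois extension of ℚ. -/

import Mathlib

open Subgroup Module

theorem aux_index_two
    (M : Type*) [Field M] [Algebra ℚ M] [FiniteDimensional ℚ M] [IsGalois ℚ M]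
    (K : IntermediateField ℚ M) (hK : Module.finrank ℚ K = 2) :
    K.fixingSubgroup.index = 2 := by
  classical
  have h1 : Nat.card K.fixingSubgroup * K.fixingSubgroup.index
      = Nat.card (M ≃ₐ[ℚ] M) := Subgroup.card_mul_index _
  have hG : Nat.card (M ≃ₐ[ℚ] M) = finrank ℚ M := by
    exact IsGalois.card_aut_eq_finrank ℚ M
  have hH : Nat.card K.fixingSubgroup = finrank K M := by
    exact IsGalois.card_fixingSubgroup_eq_finrank K
  have htower : finrank ℚ K * finrank K M = finrank ℚ M := finrank_mul_finrank ℚ K M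
  have hpos : 0 < finrank K M := finrank_pos
  have : finrank K M * K.fixingSubgroup.index = finrank K M * 2 := by
    rw [← hH] at *
    rw [h1, hG, ← htower, hK, mul_comm]
  exact Nat.eq_of_mul_eq_mul_left hpos this

/-- Let `M/ℚ` be a finite Galois extension, `K` an intermediate field of degree 2 over `ℚ`,
`H = Gal(M/K)` the fixing subgroup of `K`, `σ₀ ∈ Gal(M/ℚ) \ H`, and `ψ : H →* A` a
homomorphism to a commutative group with `ψ h * ψ (σ₀⁻¹ h σ₀) = 1` for all `h ∈ H`.
Then the fixed field of `ker ψ` is Galois over `ℚ`. -/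
theorem fixedField_ker_isGalois_of_twist_eq_inv
    (M : Type*) [Field M] [Algebra ℚ M] [FiniteDimensional ℚ M] [IsGalois ℚ M]
    (K : IntermediateField ℚ M) (hK : Module.finrank ℚ K = 2)
    (σ₀ : M ≃ₐ[ℚ] M) (hσ₀ : σ₀ ∉ K.fixingSubgroup)
    (A : Type*) [CommGroup A] (ψ : K.fixingSubgroup →* A)
    (hψ : ∀ (h : K.fixingSubgroup)
        (hmem : σ₀⁻¹ * (h : M ≃ₐ[ℚ] M) * σ₀ ∈ K.fixingSubgroup),
      ψ h * ψ ⟨σ₀⁻¹ * (h : M ≃ₐ[ℚ] M) * σ₀, hmem⟩ = 1) :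
    IsGalois ℚ (IntermediateField.fixedField (ψ.ker.map K.fixingSubgroup.subtype)) := by
  have hindex : K.fixingSubgroup.index = 2 := aux_index_two M K hK
  set N := ψ.ker.map K.fixingSubgroup.subtype with hN
  have conjH : ∀ (g : K.fixingSubgroup) (n : M ≃ₐ[ℚ] M), n ∈ N →
      (g : M ≃ₐ[ℚ] M) * n * (g : M ≃ₐ[ℚ] M)⁻¹ ∈ N := by
    rintro g n ⟨m, hm, rfl⟩
    refine ⟨g * m * g⁻¹, ?_, rfl⟩
    have hm' : ψ m = 1 := hm
    refine MonoidHom.mem_ker.mpr ?_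
    rw [map_mul, map_mul, hm', mul_one, map_inv, mul_inv_cancel]
  have conjσ : ∀ n : M ≃ₐ[ℚ] M, n ∈ N → σ₀ * n * σ₀⁻¹ ∈ N := by
    rintro n ⟨m, hm, rfl⟩
    have hm' : ψ m = 1 := hm
    have hmemH : σ₀ * (m : M ≃ₐ[ℚ] M) * σ₀⁻¹ ∈ K.fixingSubgroup := by
      rw [Subgroup.mul_mem_iff_of_index_two hindex,
        Subgroup.mul_mem_iff_of_index_two hindex]
      simp [hσ₀, m.2, Subgroup.inv_mem_iff]
    refine ⟨⟨σ₀ * (m : M ≃ₐ[ℚ] M) * σ₀⁻¹, hmemH⟩, ?_, rfl⟩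
    have hmem2 : σ₀⁻¹ * (σ₀ * (m : M ≃ₐ[ℚ] M) * σ₀⁻¹) * σ₀ ∈ K.fixingSubgroup := by
      have h : σ₀⁻¹ * (σ₀ * (m : M ≃ₐ[ℚ] M) * σ₀⁻¹) * σ₀ = (m : M ≃ₐ[ℚ] M) := by group
      rw [h]; exact m.2
    have key := hψ ⟨σ₀ * (m : M ≃ₐ[ℚ] M) * σ₀⁻¹, hmemH⟩ hmem2
    have heq : (⟨σ₀⁻¹ * ((⟨σ₀ * (m : M ≃ₐ[ℚ] M) * σ₀⁻¹, hmemH⟩ :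
        K.fixingSubgroup) : M ≃ₐ[ℚ] M) * σ₀, hmem2⟩ : K.fixingSubgroup) = m :=
      Subtype.ext (by group)
    rw [heq, hm', mul_one] at key
    exact MonoidHom.mem_ker.mpr key
  have hnormal : N.Normal := by
    constructor
    intro n hn g
    by_cases hg : g ∈ K.fixingSubgroup
    · exact conjH ⟨g, hg⟩ n hn
    · have hk : σ₀⁻¹ * g ∈ K.fixingSubgroup := by
        rw [Subgroup.mul_mem_iff_of_index_two hindex]
        simp [hσ₀, hg, Subgroup.inv_mem_iff]
      have h1 := conjσ _ (conjH ⟨σ₀⁻¹ * g, hk⟩ n hn)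
      have h2 : σ₀ * ((σ₀⁻¹ * g) * n * (σ₀⁻¹ * g)⁻¹) * σ₀⁻¹ = g * n * g⁻¹ := by group
      rwa [h2] at h1
  have h := IsGalois.of_fixedField_normal_subgroup (K := ℚ) (L := M) N
  convert h using 2
  exact Subsingleton.elim _ _
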